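/- arXiv:1801.05129 — 2 statements merged into one kernel-verified Lean document; each statement's English description precedes it below -/
import Mathlib

section
/- Let X be a finite nonempty subset of ℤ^n and let d be the dimension of the affine hull of X in ℚ^n. Then the doubling 2X = {a + b : a, b ∈ X} satisfies |2X| ≥ (d+1)|X| − (d+1 choose 2). -/
open Finset Pointwise

namespace FreimanDoublingAux

open scoped Classical

variable {n : ℕ}

/-- Coordinatewise cast `ℤ^n → ℚ^n`. -/
def e : (Fin n → ℤ) → (Fin n → ℚ) := fun v i => (v i : ℚ)

lemma e_addeq {v a b c : Fin n → ℤ} (h : v + a = b + c) : e v + e a = e b + e c := by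
  funext i
  have := congrFun h i
  simp only [Pi.add_apply] at this ⊢
  simp only [e]
  exact_mod_cast congrArg (Int.cast : ℤ → ℚ) this

lemma lex_trichotomy {a b : Fin n → ℤ} (h : a ≠ b) :
    toLex a < toLex b ∨ toLex b < toLex a := by
  have ht : IsTrichotomous (Lex (Fin n → ℤ)) (· < ·) :=
    Pi.isTrichotomous_lex _ _ IsWellFounded.wf
  rcases lt_trichotomy (toLex a) (toLex b) with h1 | h1 | h1
  · exact Or.inl h1
  · exact absurd (toLex.injective h1) h
  · exact Or.inr h1

lemma lex_lt_of_add_eq {v a b c : Fin n → ℤ} (h : v + a = b + c)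
    (hc : toLex v < toLex c) : toLex b < toLex a := by
  by_contra hba
  have h1 : toLex v + toLex a = toLex b + toLex c := congrArg toLex h
  have h2 : toLex b + toLex v < toLex b + toLex c := add_lt_add_right hc _
  rw [← h1, add_comm (toLex b) (toLex v), add_comm (toLex v) (toLex a)] at h2
  rw [add_comm (toLex a) (toLex v)] at h2
  exact hba (lt_of_add_lt_add_left h2)

lemma lex_add_ne {v b c : Fin n → ℤ} (hb : toLex v < toLex b) (hc : toLex v < toLex c) :
    v + v ≠ b + c := by
  intro h
  have h1 : toLex v + toLex v = toLex b + toLex c := congrArg toLex h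
  have h2 : toLex v + toLex v < toLex b + toLex c := add_lt_add hb hc
  rw [h1] at h2
  exact lt_irrefl _ h2

/-- The dimension of the affine hull of `X`. -/
noncomputable def dimOf (X : Finset (Fin n → ℤ)) : ℕ :=
  Module.finrank ℚ (vectorSpan ℚ (e '' (X : Set (Fin n → ℤ))))

lemma vectorSpan_eq (X : Finset (Fin n → ℤ)) {v : Fin n → ℤ} (hv : v ∈ X) :
    vectorSpan ℚ (e '' (X : Set (Fin n → ℤ)))
      = Submodule.span ℚ ((fun a => e a - e v) '' (X : Set (Fin n → ℤ))) := by
  rw [vectorSpan_eq_span_vsub_set_right ℚ (Set.mem_image_of_mem e (Finset.mem_coe.2 hv)), Set.image_image]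
  simp only [vsub_eq_sub]

/-- Atoms span: every difference `e a - e v`, for `a` in `A`, lies in the span of the
differences coming from the "atoms" of `A`, i.e. those `x ∈ A` with `v + x ∉ A + A`. -/
lemma atom_span (A : Finset (Fin n → ℤ)) (v : Fin n → ℤ)
    (hv : ∀ a ∈ A, toLex v < toLex a) :
    ∀ (k : ℕ), ∀ a ∈ A, (A.filter (fun b => toLex b < toLex a)).card ≤ k →
      e a - e v ∈ Submodule.span ℚ
        ((fun x => e x - e v) ''
          ((A.filter (fun x => ∀ b ∈ A, ∀ c ∈ A, v + x ≠ b + c) : Finset (Fin n → ℤ)) :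
            Set (Fin n → ℤ))) := by
  intro k
  induction k with
  | zero =>
    intro a ha hcard
    by_cases hQ : ∀ b ∈ A, ∀ c ∈ A, v + a ≠ b + c
    · exact Submodule.subset_span ⟨a, Finset.mem_coe.2 (Finset.mem_filter.2 ⟨ha, hQ⟩), rfl⟩
    · push_neg at hQ
      obtain ⟨b, hb, c, hc, heq⟩ := hQ
      have hba : toLex b < toLex a := lex_lt_of_add_eq heq (hv c hc)
      have hbmem : b ∈ A.filter (fun x => toLex x < toLex a) := mem_filter.2 ⟨hb, hba⟩
      have := card_pos.2 ⟨b, hbmem⟩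
      omega
  | succ k ih =>
    intro a ha hcard
    by_cases hQ : ∀ b ∈ A, ∀ c ∈ A, v + a ≠ b + c
    · exact Submodule.subset_span ⟨a, Finset.mem_coe.2 (Finset.mem_filter.2 ⟨ha, hQ⟩), rfl⟩
    · push_neg at hQ
      obtain ⟨b, hb, c, hc, heq⟩ := hQ
      have heq' : v + a = c + b := by rw [heq, add_comm]
      have hba : toLex b < toLex a := lex_lt_of_add_eq heq (hv c hc)
      have hca : toLex c < toLex a := lex_lt_of_add_eq heq' (hv b hb)
      have key : ∀ x ∈ A, toLex x < toLex a →
          (A.filter (fun y => toLex y < toLex x)).card ≤ k := by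
        intro x hxA hx
        have hss : A.filter (fun y => toLex y < toLex x) ⊆
            A.filter (fun y => toLex y < toLex a) := by
          intro y hy
          rw [mem_filter] at hy ⊢
          exact ⟨hy.1, hy.2.trans hx⟩
        have hlt : (A.filter (fun y => toLex y < toLex x)).card <
            (A.filter (fun y => toLex y < toLex a)).card := by
          apply card_lt_card
          refine ⟨hss, fun hsub => ?_⟩
          have hxmem : x ∈ A.filter (fun y => toLex y < toLex a) := mem_filter.2 ⟨hxA, hx⟩
          have := mem_filter.1 (hsub hxmem)
          exact lt_irrefl _ this.2
        omega
      have eb := ih b hb (key b hb hba)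
      have ec := ih c hc (key c hc hca)
      have h3 : e v + e a = e b + e c := e_addeq heq
      have hsum : e a - e v = (e b - e v) + (e c - e v) := by
        linear_combination h3
      rw [hsum]
      exact Submodule.add_mem _ eb ec

lemma main (N : ℕ) : ∀ (X : Finset (Fin n → ℤ)), X.card ≤ N → X.Nonempty →
    ((dimOf X + 1) * X.card : ℤ) - ((dimOf X + 1).choose 2 : ℤ) ≤ ((X + X).card : ℤ) := by
  induction N with
  | zero =>
    intro X hle hne
    have := card_pos.2 hne
    omega
  | succ N ih =>
    intro X hcard hne
    -- pick the lexicographically minimal element `v` of `X`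
    obtain ⟨m, hm, hmmin⟩ := (X.image toLex).exists_minimal ((hne.image toLex))
    obtain ⟨v, hvX, hvm⟩ := mem_image.1 hm
    have hvmin : ∀ a ∈ X, a ≠ v → toLex v < toLex a := by
      intro a haX hne'
      rcases lex_trichotomy (show v ≠ a from fun h => hne' h.symm) with h | h
      · exact h
      · subst hvm; exact absurd (hmmin (mem_image_of_mem toLex haX) h.le) (not_le.2 h)
    set A := X.erase v with hA
    by_cases hA0 : A = ∅
    · -- X is a singleton
      have hX1 : X = {v} := by
        apply Finset.eq_singleton_iff_unique_mem.2
        refine ⟨hvX, fun x hx => ?_⟩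
        by_contra hxv
        exact (Finset.notMem_empty x) (hA0 ▸ Finset.mem_erase.2 ⟨hxv, hx⟩)
      have hdim : dimOf X = 0 := by
        have hc : (X : Set (Fin n → ℤ)) = {v} := by rw [hX1]; exact Finset.coe_singleton v
        rw [dimOf, hc, Set.image_singleton, vectorSpan_singleton]
        exact finrank_bot ℚ _
      have hXX : ({v} : Finset (Fin n → ℤ)) + {v} = {v + v} := by
        rw [Finset.singleton_add_singleton]
      rw [hdim, hX1, hXX]
      simp only [CharP.cast_eq_zero, zero_add, card_singleton, Nat.cast_one, mul_one,
        Nat.choose_succ_self, sub_zero, le_refl]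
    · have hAne : A.Nonempty := Finset.nonempty_of_ne_empty hA0
      have hvlt : ∀ a ∈ A, toLex v < toLex a := fun a haA =>
        hvmin a (Finset.mem_of_mem_erase haA) (Finset.ne_of_mem_erase haA)
      have hAcard : A.card = X.card - 1 := Finset.card_erase_of_mem hvX
      have hXpos : 1 ≤ X.card := card_pos.2 hne
      have hIH := ih A (by omega) hAne
      have hAsub : A + A ⊆ X + X :=
        Finset.add_subset_add (Finset.erase_subset v X) (Finset.erase_subset v X)
      set Q := A.filter (fun x => ∀ b ∈ A, ∀ c ∈ A, v + x ≠ b + c) with hQdef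
      set P := insert v Q with hPdef
      have hQA : Q ⊆ A := Finset.filter_subset _ _
      have hvQ : v ∉ Q := fun h => (Finset.notMem_erase v X) (hQA h)
      have hPcard : P.card = Q.card + 1 := Finset.card_insert_of_notMem hvQ
      have hPX : P ⊆ X :=
        Finset.insert_subset hvX (hQA.trans (Finset.erase_subset v X))
      have hPnew : ∀ a ∈ P, (v + a) ∉ A + A := by
        intro a haP hmem
        obtain ⟨b, hb, c, hc, hbc⟩ := Finset.mem_add.1 hmem
        rcases Finset.mem_insert.1 haP with rfl | haQ
        · exact lex_add_ne (hvlt b hb) (hvlt c hc) hbc.symm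
        · exact (Finset.mem_filter.1 haQ).2 b hb c hc hbc.symm
      have hdisj : Disjoint (A + A) (P.image (fun a => v + a)) := by
        rw [Finset.disjoint_right]
        intro x hx
        obtain ⟨a, haP, rfl⟩ := Finset.mem_image.1 hx
        exact hPnew a haP
      have hsub2 : P.image (fun a => v + a) ⊆ X + X := by
        intro x hx
        obtain ⟨a, haP, rfl⟩ := Finset.mem_image.1 hx
        exact Finset.add_mem_add hvX (hPX haP)
      have hcard2 : (P.image (fun a => v + a)).card = P.card :=
        Finset.card_image_of_injective _ (add_right_injective v)
      have hbound : (A + A).card + P.card ≤ (X + X).card := by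
        calc (A + A).card + P.card = ((A + A) ∪ P.image (fun a => v + a)).card := by
              rw [Finset.card_union_of_disjoint hdisj, hcard2]
          _ ≤ (X + X).card := Finset.card_le_card (Finset.union_subset hAsub hsub2)
      set d := dimOf X with hd
      set d' := dimOf A with hd'
      -- d' ≤ d
      have hd'd : d' ≤ d := by
        apply Submodule.finrank_mono
        exact vectorSpan_mono ℚ (Set.image_mono (f := e) (by exact_mod_cast Finset.erase_subset v X))
      -- d ≤ d' + 1
      have hXins : (X : Set (Fin n → ℤ)) = insert v (A : Set (Fin n → ℤ)) := by
        rw [hA, Finset.coe_erase, Set.insert_diff_singleton, Set.insert_eq_of_mem]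
        exact hvX
      have hdd' : d ≤ d' + 1 := by
        obtain ⟨a0, ha0⟩ := hAne
        have ha0X : a0 ∈ X := Finset.mem_of_mem_erase ha0
        have h2 : Module.finrank ℚ (Submodule.span ℚ ({e v - e a0} : Set (Fin n → ℚ))) ≤ 1 := by
          have h5 := finrank_span_finset_le_card (R := ℚ) ({e v - e a0} : Finset (Fin n → ℚ))
          rw [Set.finrank, Finset.coe_singleton, Finset.card_singleton] at h5
          exact h5
        have h3 : Submodule.span ℚ ((fun a => e a - e a0) '' (A : Set (Fin n → ℤ)))
            = vectorSpan ℚ (e '' (A : Set (Fin n → ℤ))) := (vectorSpan_eq A ha0).symm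
        have h1 := Submodule.finrank_add_le_finrank_add_finrank
          (Submodule.span ℚ ({e v - e a0} : Set (Fin n → ℚ)))
          (Submodule.span ℚ ((fun a => e a - e a0) '' (A : Set (Fin n → ℤ))))
        have goal' : Module.finrank ℚ (vectorSpan ℚ (e '' (X : Set (Fin n → ℤ)))) ≤
            Module.finrank ℚ (vectorSpan ℚ (e '' (A : Set (Fin n → ℤ)))) + 1 := by
          rw [vectorSpan_eq X ha0X, hXins, Set.image_insert_eq, Submodule.span_insert]
          refine h1.trans ?_
          rw [h3]
          omega
        exact goal'
      -- case split
      by_cases hcase : d ≤ d'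
      · -- here `d = d'`; use the atoms bound `d + 1 ≤ P.card`
        have hdeq : d' = d := le_antisymm hcase hd'd |>.symm
        -- `vectorSpan X` is contained in the span of the atom differences
        have hspan : vectorSpan ℚ (e '' (X : Set (Fin n → ℤ))) ≤
            Submodule.span ℚ ((fun x => e x - e v) '' (Q : Set (Fin n → ℤ))) := by
          rw [vectorSpan_eq X hvX]
          apply Submodule.span_le.2
          rintro _ ⟨x, hx, rfl⟩
          rcases eq_or_ne x v with rfl | hxv
          · simp
          · have hxA : x ∈ A := Finset.mem_erase.2 ⟨hxv, hx⟩
            exact atom_span A v hvlt _ x hxA le_rfl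
        have hdQ : d ≤ Q.card := by
          have h1 : d ≤ Module.finrank ℚ
              (Submodule.span ℚ ((fun x => e x - e v) '' (Q : Set (Fin n → ℤ)))) :=
            Submodule.finrank_mono hspan
          have h2 := finrank_span_finset_le_card (R := ℚ)
            (Q.image (fun x => e x - e v))
          rw [Set.finrank, Finset.coe_image] at h2
          exact h1.trans (h2.trans (Finset.card_image_le))
        have hPd : (d : ℤ) + 1 ≤ (P.card : ℤ) := by
          have : d + 1 ≤ P.card := by omega
          exact_mod_cast this
        rw [hdeq] at hIH
        have hAc : (A.card : ℤ) = (X.card : ℤ) - 1 := by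
          rw [hAcard]; push_cast [hXpos]; omega
        have hprod : ((d : ℤ) + 1) * (X.card : ℤ)
            = ((d : ℤ) + 1) * (A.card : ℤ) + ((d : ℤ) + 1) := by
          rw [hAc]; ring
        have hb' : ((A + A).card : ℤ) + (P.card : ℤ) ≤ ((X + X).card : ℤ) := by
          exact_mod_cast hbound
        -- casts already aligned
        linarith
      · -- here `d = d' + 1`; every sum `v + a`, `a ∈ X`, is a new element
        have hdeq : d = d' + 1 := by omega
        have hXP : X ⊆ P := by
          intro a haX
          rcases eq_or_ne a v with rfl | hav
          · exact Finset.mem_insert_self _ _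
          · have haA : a ∈ A := Finset.mem_erase.2 ⟨hav, haX⟩
            apply Finset.mem_insert_of_mem
            rw [hQdef, Finset.mem_filter]
            refine ⟨haA, fun b hb c hc heq => ?_⟩
            -- derive `d ≤ d'`, contradiction
            have hbX : b ∈ X := Finset.mem_of_mem_erase hb
            have hcX : c ∈ X := Finset.mem_of_mem_erase hc
            have h3 : e v + e a = e b + e c := e_addeq heq
            have hvmem : e v - e a ∈ vectorSpan ℚ (e '' (A : Set (Fin n → ℤ))) := by
              have hsum : e v - e a = (e b - e a) + (e c - e a) - (e a - e a) := by
                linear_combination h3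
              have m1 : e b - e a ∈ vectorSpan ℚ (e '' (A : Set (Fin n → ℤ))) := by
                have := vsub_mem_vectorSpan ℚ (Set.mem_image_of_mem e hb)
                  (Set.mem_image_of_mem e haA)
                simpa [vsub_eq_sub] using this
              have m2 : e c - e a ∈ vectorSpan ℚ (e '' (A : Set (Fin n → ℤ))) := by
                have := vsub_mem_vectorSpan ℚ (Set.mem_image_of_mem e hc)
                  (Set.mem_image_of_mem e haA)
                simpa [vsub_eq_sub] using this
              rw [hsum]
              simpa using Submodule.add_mem _ m1 m2
            have hle : vectorSpan ℚ (e '' (X : Set (Fin n → ℤ))) ≤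
                vectorSpan ℚ (e '' (A : Set (Fin n → ℤ))) := by
              rw [vectorSpan_eq X haX]
              apply Submodule.span_le.2
              rintro _ ⟨x, hx, rfl⟩
              rcases eq_or_ne x v with rfl | hxv
              · exact hvmem
              · have hxA : x ∈ A := Finset.mem_erase.2 ⟨hxv, hx⟩
                have := vsub_mem_vectorSpan ℚ (Set.mem_image_of_mem e hxA)
                  (Set.mem_image_of_mem e haA)
                simpa [vsub_eq_sub] using this
            have : d ≤ d' := Submodule.finrank_mono hle
            omega
        have hPXeq : P = X := le_antisymm hPX hXP
        have hPcardX : P.card = X.card := by rw [hPXeq]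
        have hAc : (A.card : ℤ) = (X.card : ℤ) - 1 := by
          rw [hAcard]; push_cast [hXpos]; omega
        have hb' : ((A + A).card : ℤ) + (X.card : ℤ) ≤ ((X + X).card : ℤ) := by
          rw [← hPcardX]; exact_mod_cast hbound
        have hch : (((d + 1).choose 2 : ℕ) : ℤ) = (d : ℤ) + ((d.choose 2 : ℕ) : ℤ) := by
          have : (d + 1).choose 2 = d.choose 1 + d.choose 2 := Nat.choose_succ_succ d 1
          rw [this, Nat.choose_one_right]
          push_cast
          ring
        rw [hdeq] at *
        have hprod : ((d' : ℤ) + 1) * (A.card : ℤ)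
            = ((d' : ℤ) + 1 + 1) * (X.card : ℤ) - (X.card : ℤ) - ((d' : ℤ) + 1) := by
          rw [hAc]; ring
        push_cast at hIH hch ⊢
        linarith

end FreimanDoublingAux

open FreimanDoublingAux in
/-- **Freiman's theorem.** If `X` is a finite nonempty subset of `ℤ^n` and `d` is the
dimension of the affine hull of `X` (viewed in `ℚ^n`), then the doubling
`2X = {a + b : a, b ∈ X}` satisfies `|2X| ≥ (d+1)|X| − (d+1 choose 2)`. -/
theorem freiman_doubling (n : ℕ) (X : Finset (Fin n → ℤ)) (hX : X.Nonempty) (d : ℕ)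
    (hd : d = Module.finrank ℚ
      (vectorSpan ℚ ((fun v : Fin n → ℤ => fun i => (v i : ℚ)) '' (X : Set (Fin n → ℤ))))) :
    ((d + 1) * X.card : ℤ) - ((d + 1).choose 2 : ℤ) ≤ ((X + X).card : ℤ) := by
  have hdd : d = dimOf X := hd
  rw [hdd]
  exact main X.card X le_rfl hX
end

section
/- Let G be a finite simple graph. The edge ring K[G] = K[x_i x_j : {i,j} ∈ E(G)] is (isomorphic to) a polynomial ring over K — equivalently, the monomials x_i x_j for {i,j} ∈ E(G) are algebraically independent over K — if and only if each connected component of G contains at most one cycle, and this cycle is odd. -/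
namespace FreimanPaper

open MvPolynomial

variable {V : Type*}

/-- The quadratic monomial `x_i x_j` attached to an edge `e = {i, j}`. -/
noncomputable def edgeMonomial (K : Type*) [Field K] (e : Sym2 V) : MvPolynomial V K :=
  Sym2.lift ⟨fun i j => X i * X j, fun i j => mul_comm _ _⟩ e

/-- Every cycle of `G` is odd, and any two cycles lying in the same connected
component of `G` have the same edge set; i.e. each connected component of `G`
contains at most one cycle, and this cycle is odd. -/
def AtMostOneOddCyclePerComponent (G : SimpleGraph V) : Prop :=
  (∀ (u : V) (c : G.Walk u u), c.IsCycle → Odd c.length) ∧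
  (∀ (u v : V) (c : G.Walk u u) (c' : G.Walk v v), c.IsCycle → c'.IsCycle →
    G.Reachable u v → ∀ e, e ∈ c.edges ↔ e ∈ c'.edges)

end FreimanPaper


namespace EdgeRingAux

open SimpleGraph Finset MvPolynomial

variable {V : Type*}

open Classical in
/-- incidence value of vertex `v` in edge `e` (0 or 1). -/
noncomputable def inc (e : Sym2 V) (v : V) : ℤ := if v ∈ e then 1 else 0

open Classical in
noncomputable def T [Fintype V] (z : Sym2 V → ℤ) (v : V) : ℤ := ∑ e : Sym2 V, z e * inc e v

open Classical in
noncomputable def altE {G : SimpleGraph V} : ∀ {a b : V}, G.Walk a b → Sym2 V → ℤ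
  | _, _, .nil => 0
  | a, _, .cons (v := c) _ q => fun e => (if e = s(a, c) then 1 else 0) - altE q e

open Classical in
lemma altE_nil {G : SimpleGraph V} {a : V} : altE (Walk.nil : G.Walk a a) = 0 := rfl

open Classical in
lemma altE_cons {G : SimpleGraph V} {a c b : V} (h : G.Adj a c) (q : G.Walk c b) (e : Sym2 V) :
    altE (Walk.cons h q) e = (if e = s(a, c) then 1 else 0) - altE q e := by
  simp [altE]

lemma altE_support {G : SimpleGraph V} {a b : V} (p : G.Walk a b) (e : Sym2 V)
    (h : altE p e ≠ 0) : e ∈ p.edges := by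
  classical
  induction p with
  | nil => simp [altE_nil] at h
  | @cons a c b h' q ih =>
    rw [altE_cons] at h
    by_cases he : e = s(a, c)
    · simp [he]
    · rw [if_neg he, zero_sub, neg_ne_zero] at h
      simp [ih h]

lemma altE_pm {G : SimpleGraph V} {a b : V} (p : G.Walk a b) (hnd : p.edges.Nodup) (e : Sym2 V)
    (he : e ∈ p.edges) : altE p e = 1 ∨ altE p e = -1 := by
  classical
  induction p with
  | nil => simp at he
  | @cons a c b h' q ih =>
    rw [Walk.edges_cons] at he hnd
    rw [altE_cons]
    rcases List.mem_cons.mp he with rfl | he'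
    · rw [if_pos rfl]
      have hz : altE q s(a, c) = 0 := by
        by_contra hh
        exact (List.nodup_cons.mp hnd).1 (altE_support q _ hh)
      simp [hz]
    · have hne : e ≠ s(a, c) := by
        rintro rfl
        exact (List.nodup_cons.mp hnd).1 he'
      rw [if_neg hne, zero_sub]
      rcases ih (List.nodup_cons.mp hnd).2 he' with h1 | h1 <;> simp [h1]

open Classical in
noncomputable def delta (a v : V) : ℤ := if v = a then 1 else 0

lemma inc_sym2 {a c : V} (hac : a ≠ c) (v : V) :
    inc s(a, c) v = delta a v + delta c v := by
  classical
  simp only [inc, delta, Sym2.mem_iff]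
  by_cases h1 : v = a <;> by_cases h2 : v = c <;> simp_all

lemma T_altE [Fintype V] {G : SimpleGraph V} {a b : V} (p : G.Walk a b) (v : V) :
    T (altE p) v = delta a v + (-1)^(p.length+1) * delta b v := by
  classical
  induction p with
  | nil =>
    simp only [T, altE, Pi.zero_apply, zero_mul, Finset.sum_const_zero, Walk.length_nil,
      pow_one]
    ring
  | @cons a c b h q ih =>
    have key : T (altE (Walk.cons h q)) v = inc s(a, c) v - T (altE q) v := by
      simp only [T, altE, sub_mul, ite_mul, one_mul, zero_mul, Finset.sum_sub_distrib]
      simp [Finset.sum_ite_eq']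
    rw [key, ih, inc_sym2 h.ne v, Walk.length_cons]
    ring



section Cycles

variable {H : SimpleGraph V}

/-- Walk along a sequence of pairwise-adjacent vertices. -/
def walkOfFn (H : SimpleGraph V) (v : ℕ → V) (hadj : ∀ n, H.Adj (v n) (v (n+1))) :
    ∀ (k n : ℕ), H.Walk (v n) (v (n+k))
  | 0, _ => Walk.nil
  | k+1, n => (walkOfFn H v hadj k n).concat (hadj (n+k))

lemma walkOfFn_edges (v : ℕ → V) (hadj : ∀ n, H.Adj (v n) (v (n+1))) (k n : ℕ) :
    (walkOfFn H v hadj k n).edges = (List.range k).map (fun i => s(v (n+i), v (n+i+1))) := by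
  induction k with
  | zero => rfl
  | succ k ih =>
    rw [walkOfFn, Walk.edges_concat, ih, List.range_succ, List.map_append, List.concat_eq_append]
    rfl

/-- A finite graph in which every vertex entered by an edge can be exited through a
different edge contains a cycle. -/
lemma exists_cycle_all [Fintype V] {x y : V} (hxy : H.Adj x y)
    (hdeg : ∀ v u, H.Adj v u → ∃ w, H.Adj v w ∧ w ≠ u) :
    ∃ (u : V) (c : H.Walk u u), c.IsCycle := by
  classical
  let f : ℕ → {p : V × V // H.Adj p.1 p.2} := fun n =>
    Nat.rec ⟨(x, y), hxy⟩
      (fun _ p => ⟨(p.1.2, (hdeg p.1.2 p.1.1 p.2.symm).choose),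
        (hdeg p.1.2 p.1.1 p.2.symm).choose_spec.1⟩) n
  let v : ℕ → V := fun n => (f n).1.1
  have hadj : ∀ n, H.Adj (v n) (v (n+1)) := fun n => (f n).2
  have hnb : ∀ n, v (n+2) ≠ v n := fun n => (hdeg (f n).1.2 (f n).1.1 (f n).2.symm).choose_spec.2
  have hex : ∃ j : ℕ, ∃ i : ℕ, i < j ∧ v i = v j := by
    obtain ⟨i, j, hne, hij⟩ := Fintype.exists_ne_map_eq_of_card_lt
      (fun i : Fin (Fintype.card V + 1) => v i) (by simp)
    rcases lt_or_gt_of_ne (show (i:ℕ) ≠ j from fun h => hne (Fin.ext h)) with h | h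
    exacts [⟨j, i, h, hij⟩, ⟨i, j, h, hij.symm⟩]
  set j₀ := Nat.find hex with hj₀
  obtain ⟨i₀, hi₀lt, hi₀⟩ : ∃ i, i < j₀ ∧ v i = v j₀ := Nat.find_spec hex
  have hmin : ∀ a b, a < b → b < j₀ → v a ≠ v b := by
    intro a b hab hbj hvab
    exact Nat.find_min hex hbj ⟨a, hab, hvab⟩
  have hL1 : j₀ ≠ i₀ + 1 := by
    intro h
    exact (hadj i₀).ne (hi₀.trans (congrArg v h))
  have hL2 : j₀ ≠ i₀ + 2 := by
    intro h
    exact hnb i₀ ((congrArg v h.symm).trans hi₀.symm)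
  have hge : i₀ + 3 ≤ j₀ := by omega
  have hidx : (i₀+1) + (j₀ - (i₀+1)) = j₀ := by omega
  let W : H.Walk (v (i₀+1)) (v ((i₀+1) + (j₀ - (i₀+1)))) := walkOfFn H v hadj (j₀ - (i₀+1)) (i₀+1)
  have hWe : ∀ e' ∈ W.edges, e' ≠ s(v i₀, v (i₀+1)) := by
    rw [walkOfFn_edges]
    intro e' he'
    obtain ⟨i, hi, rfl⟩ := List.mem_map.mp he'
    rw [List.mem_range] at hi
    intro heq
    rw [Sym2.eq_iff] at heq
    rcases heq with ⟨h1, _⟩ | ⟨h1, h2⟩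
    · exact hmin i₀ (i₀+1+i) (by omega) (by omega) h1.symm
    · rcases Nat.eq_zero_or_pos i with rfl | hpos
      · exact hnb i₀ (by simpa using h2)
      · exact hmin (i₀+1) (i₀+1+i) (by omega) (by omega) h1.symm
  let W' : H.Walk (v (i₀+1)) (v i₀) := W.copy rfl (by rw [hidx, ← hi₀])
  have hWe' : ∀ e' ∈ W'.edges, e' ∉ ({s(v i₀, v (i₀+1))} : Set (Sym2 V)) := by
    intro e' he'
    rw [Walk.edges_copy] at he'
    simpa using hWe e' he'
  have hreach : (H \ SimpleGraph.fromEdgeSet {s(v i₀, v (i₀+1))}).Reachable (v i₀) (v (i₀+1)) :=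
    (Reachable.symm ⟨W'.toDeleteEdges _ hWe'⟩ :
      (H.deleteEdges {s(v i₀, v (i₀+1))}).Reachable (v i₀) (v (i₀+1)))
  obtain ⟨u, c, hc, -⟩ :=
    SimpleGraph.adj_and_reachable_delete_edges_iff_exists_cycle.mp ⟨hadj i₀, hreach⟩
  exact ⟨u, c, hc⟩

/-- Trimming induction: a finite graph with an edge, in which every vertex except
possibly `x` has no incident edge or at least two, contains a cycle. -/
lemma exists_cycle_except [Fintype V] :
    ∀ (n : ℕ) (H : SimpleGraph V) (x y : V), H.edgeSet.ncard ≤ n → H.Adj x y →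
      (∀ v, v ≠ x → ∀ u, H.Adj v u → ∃ w, H.Adj v w ∧ w ≠ u) →
      ∃ (u : V) (c : H.Walk u u), c.IsCycle := by
  intro n
  induction n with
  | zero =>
    intro H x y hcard hxy _
    have : s(x, y) ∈ H.edgeSet := hxy
    have hne : H.edgeSet.Nonempty := ⟨_, this⟩
    rw [Nat.le_zero, Set.ncard_eq_zero (Set.toFinite _)] at hcard
    rw [hcard] at hne
    exact absurd hne (by simp)
  | succ n ih =>
    intro H x y hcard hxy hdeg
    by_cases hx : ∀ u, H.Adj x u → ∃ w, H.Adj x w ∧ w ≠ u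
    · refine exists_cycle_all hxy ?_
      intro v u hvu
      by_cases hvx : v = x
      · exact hvx ▸ hx u (hvx ▸ hvu)
      · exact hdeg v hvx u hvu
    · push_neg at hx
      obtain ⟨w, hw, huniq⟩ := hx
      have hwx : w ≠ x := hw.ne'
      -- delete the pendant edge s(x, w)
      set H' := H.deleteEdges {s(x, w)} with hH'
      obtain ⟨u', hu', hu'x⟩ := hdeg w hwx x hw.symm
      have hAdj' : ∀ a b, H'.Adj a b ↔ H.Adj a b ∧ s(a, b) ≠ s(x, w) := by
        intro a b
        rw [hH', SimpleGraph.deleteEdges_adj]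
        simp
      have hwu' : H'.Adj w u' := by
        rw [hAdj']
        refine ⟨hu', ?_⟩
        intro heq
        rw [Sym2.eq_iff] at heq
        rcases heq with ⟨rfl, -⟩ | ⟨-, rfl⟩
        · exact hwx rfl
        · exact hu'x rfl
      have hdeg' : ∀ v, v ≠ w → ∀ u, H'.Adj v u → ∃ z, H'.Adj v z ∧ z ≠ u := by
        intro v hvw u hvu
        rw [hAdj'] at hvu
        by_cases hvx : v = x
        · exfalso
          subst hvx
          exact hvu.2 (by rw [huniq u hvu.1])
        · obtain ⟨z, hz, hzu⟩ := hdeg v hvx u hvu.1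
          refine ⟨z, ?_, hzu⟩
          rw [hAdj']
          refine ⟨hz, ?_⟩
          intro heq
          rw [Sym2.eq_iff] at heq
          rcases heq with ⟨heq2, -⟩ | ⟨heq3, -⟩
          · exact hvx heq2
          · exact hvw heq3
      have hcard' : H'.edgeSet.ncard ≤ n := by
        have hmem : s(x, w) ∈ H.edgeSet := hw
        have : H'.edgeSet = H.edgeSet \ {s(x, w)} := SimpleGraph.edgeSet_deleteEdges _
        rw [this, Set.ncard_diff_singleton_of_mem hmem]
        have hpos : 1 ≤ H.edgeSet.ncard := by
          rw [Nat.one_le_iff_ne_zero]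
          intro h0
          rw [Set.ncard_eq_zero (Set.toFinite _)] at h0
          exact absurd (h0 ▸ hmem) (by simp)
        omega
      obtain ⟨u, c, hc⟩ := ih H' w u' hcard' hwu' hdeg'
      exact ⟨u, Walk.mapLe (SimpleGraph.deleteEdges_le _) c, hc.mapLe _⟩
end Cycles



section Alt

variable {G : SimpleGraph V}

lemma mem_support_of_mem_edges' {a b w : V} (p : G.Walk a b) {e : Sym2 V}
    (he : e ∈ p.edges) (hw : w ∈ e) : w ∈ p.support := by
  obtain ⟨y, rfl⟩ := Sym2.mem_iff_exists.mp hw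
  exact p.fst_mem_support_of_mem_edges he

lemma start_mem_head_edges {a b : V} (p : G.Walk a b) (h : p.edges ≠ []) :
    a ∈ p.edges.head h := by
  cases p with
  | nil => simp at h
  | cons h' q => simp [Walk.edges_cons]

lemma end_mem_getLast_edges {a b : V} (p : G.Walk a b) (h : p.edges ≠ []) :
    b ∈ p.edges.getLast h := by
  have h' : p.reverse.edges ≠ [] := by
    rw [Walk.edges_reverse]
    simpa using h
  have := start_mem_head_edges p.reverse h'
  simp only [Walk.edges_reverse, List.head_reverse] at this
  exact this

lemma head_edge_of_mem {a b : V} {p : G.Walk a b} (hp : p.IsPath) {e : Sym2 V}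
    (he : e ∈ p.edges) (ha : a ∈ e) (h : p.edges ≠ []) : e = p.edges.head h := by
  cases p with
  | nil => simp at he
  | @cons a c b h' q =>
    have hh : (Walk.cons h' q).edges.head h = s(a, c) := by
      simp [Walk.edges_cons]
    rw [hh]
    rw [Walk.edges_cons] at he
    rcases List.mem_cons.mp he with rfl | he'
    · rfl
    · exfalso
      have : a ∈ q.support := mem_support_of_mem_edges' q he' ha
      exact ((Walk.cons_isPath_iff _ _).mp hp).2 this

lemma last_edge_of_mem {a b : V} {p : G.Walk a b} (hp : p.IsPath) {e : Sym2 V}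
    (he : e ∈ p.edges) (hb : b ∈ e) (h : p.edges ≠ []) : e = p.edges.getLast h := by
  have h' : p.reverse.edges ≠ [] := by rw [Walk.edges_reverse]; simpa using h
  have := head_edge_of_mem hp.reverse (by rw [Walk.edges_reverse]; simpa using he) hb h'
  simp only [Walk.edges_reverse, List.head_reverse] at this
  exact this

lemma inc_self_left (a c : V) : inc s(a, c) a = 1 := by
  simp [inc]

lemma alt_path [Fintype V] (z : Sym2 V → ℤ) :
    ∀ {c b : V} (q : G.Walk c b) {a : V} (h : G.Adj a c), q.IsPath →
      (∀ v ∈ q.support, v ≠ b → a ≠ v) → (a = b → 2 ≤ q.length) →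
      (∀ v ∈ q.support, v ≠ b → T z v = 0 ∧
          ∀ e, z e ≠ 0 → v ∈ e → e ∈ (Walk.cons h q).edges) →
      z ((Walk.cons h q).edges.getLast (by simp)) = (-1)^q.length * z s(a, c) := by
  intro c b q
  induction q with
  | nil => intro a h _ _ _ _; simp
  | @cons c d b h' q' ih =>
    intro a h hqp ha hab hyp
    have hq'p : q'.IsPath := hqp.of_cons
    have hcnotin : c ∉ q'.support := ((Walk.cons_isPath_iff _ _).mp hqp).2
    have hbq' : b ∈ q'.support := Walk.end_mem_support q'
    have hcb : c ≠ b := fun hcb => hcnotin (hcb ▸ hbq')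
    have hdq : d ∈ (Walk.cons h' q').support := by
      rw [Walk.support_cons]
      exact List.mem_cons_of_mem _ (Walk.start_mem_support q')
    have had : a ≠ d := by
      by_cases hdb : d = b
      · subst hdb
        have : q' = Walk.nil := Walk.isPath_iff_eq_nil.mp hq'p
        intro hadeq
        have h2 : 2 ≤ (Walk.cons h' q').length := hab (hadeq.trans rfl)
        rw [this] at h2
        simp at h2
      · exact ha d hdq hdb
    have hne12 : s(a, c) ≠ s(c, d) := by
      intro heq
      rw [Sym2.eq_iff] at heq
      rcases heq with ⟨rfl, -⟩ | ⟨h1, -⟩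
      · exact h.ne rfl
      · exact had h1
    obtain ⟨hsum, hedges⟩ := hyp c (Walk.start_mem_support _) hcb
    -- evaluate the vertex relation at c
    have hTc : T z c = z s(a, c) + z s(c, d) := by
      classical
      rw [T, ← Finset.sum_subset (Finset.subset_univ ({s(a,c), s(c,d)} : Finset (Sym2 V)))]
      · rw [Finset.sum_insert (by simpa using hne12), Finset.sum_singleton]
        have i1 : inc s(a, c) c = 1 := by simp [inc]
        have i2 : inc s(c, d) c = 1 := inc_self_left c d
        rw [i1, i2, mul_one, mul_one]
      · intro e _ hnotin
        by_cases hz : z e = 0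
        · simp [hz]
        by_cases hcm : c ∈ e
        · exfalso
          have hmem := hedges e hz hcm
          rw [Walk.edges_cons, Walk.edges_cons] at hmem
          rcases List.mem_cons.mp hmem with rfl | hmem'
          · exact hnotin (by simp)
          rcases List.mem_cons.mp hmem' with rfl | hmem''
          · exact hnotin (by simp)
          · exact hcnotin (mem_support_of_mem_edges' q' hmem'' hcm)
        · simp [inc, hcm]
    have hzcd : z s(c, d) = - z s(a, c) := by
      have := hsum
      rw [hTc] at this
      linarith
    -- recursive step
    have ha' : ∀ v ∈ q'.support, v ≠ b → c ≠ v := fun v hv _ hcv => hcnotin (hcv ▸ hv)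
    have hab' : c = b → 2 ≤ q'.length := fun hcb' => absurd hcb' hcb
    have hyp' : ∀ v ∈ q'.support, v ≠ b → T z v = 0 ∧
        ∀ e, z e ≠ 0 → v ∈ e → e ∈ (Walk.cons h' q').edges := by
      intro v hv hvb
      obtain ⟨h1, h2⟩ := hyp v (by rw [Walk.support_cons]; exact List.mem_cons_of_mem _ hv) hvb
      refine ⟨h1, fun e hz hve => ?_⟩
      have h3 := h2 e hz hve
      rw [Walk.edges_cons] at h3
      rcases List.mem_cons.mp h3 with rfl | h4
      · exfalso
        rcases Sym2.mem_iff.mp hve with rfl | rfl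
        · exact ha v (by rw [Walk.support_cons]; exact List.mem_cons_of_mem _ hv) hvb rfl
        · exact hcnotin hv
      · exact h4
    have hih := ih h' hq'p ha' hab' hyp'
    have hL : (Walk.cons h (Walk.cons h' q')).edges.getLast (by simp)
        = (Walk.cons h' q').edges.getLast (by simp) := by
      simp only [Walk.edges_cons]
      exact List.getLast_cons _
    rw [hL, hih, hzcd, Walk.length_cons]
    ring

end Alt



section Main

lemma mapLe_edges {G G' : SimpleGraph V} (hle : G ≤ G') {a b : V} (p : G.Walk a b) :
    (Walk.mapLe hle p).edges = p.edges := by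
  induction p with
  | nil => rfl
  | cons h q ih =>
    simp only [Walk.mapLe, Walk.map_cons, Walk.edges_cons] at *
    rw [ih]
    congr 1

lemma mapLe_length {G G' : SimpleGraph V} (hle : G ≤ G') {a b : V} (p : G.Walk a b) :
    (Walk.mapLe hle p).length = p.length := by
  simp [Walk.mapLe, Walk.length_map]

lemma cond_imp_ker_trivial [Fintype V] {G : SimpleGraph V}
    (hodd : ∀ (u : V) (c : G.Walk u u), c.IsCycle → Odd c.length)
    (huniq : ∀ (u v : V) (c : G.Walk u u) (c' : G.Walk v v), c.IsCycle → c'.IsCycle →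
      G.Reachable u v → ∀ e, e ∈ c.edges ↔ e ∈ c'.edges)
    (z : Sym2 V → ℤ) (hsupp : ∀ e, z e ≠ 0 → e ∈ G.edgeSet) (hT : ∀ v, T z v = 0) :
    z = 0 := by
  classical
  by_contra hz
  obtain ⟨e₀, he₀⟩ : ∃ e, z e ≠ 0 := by
    by_contra h
    push_neg at h
    exact hz (funext fun e => h e)
  -- every endpoint of a support edge has another support edge
  have step2 : ∀ (v : V) (e : Sym2 V), z e ≠ 0 → v ∈ e →
      ∃ e', z e' ≠ 0 ∧ v ∈ e' ∧ e' ≠ e := by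
    intro v e hze hve
    by_contra hcon
    push_neg at hcon
    have hTv : T z v = z e := by
      rw [T, Finset.sum_eq_single e]
      · have h1 : inc e v = 1 := by simp [inc, hve]
        rw [h1, mul_one]
      · intro b _ hbe
        by_cases hzb : z b = 0
        · simp [hzb]
        by_cases hvb : v ∈ b
        · exact absurd (hcon b hzb hvb) hbe
        · simp [inc, hvb]
      · intro hnm
        exact absurd (Finset.mem_univ e) hnm
    rw [hT v] at hTv
    exact hze hTv.symm
  -- the support graph
  set H := SimpleGraph.fromEdgeSet {e | z e ≠ 0} with hH
  have hHadj : ∀ a b, H.Adj a b ↔ z s(a, b) ≠ 0 ∧ a ≠ b := by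
    intro a b
    rw [hH, SimpleGraph.fromEdgeSet_adj]
    rfl
  have hHG : H ≤ G := by
    intro a b hab
    exact (G.mem_edgeSet).mp (hsupp _ ((hHadj a b).mp hab).1)
  have hHz : ∀ a b, H.Adj a b → z s(a, b) ≠ 0 := fun a b h => ((hHadj a b).mp h).1
  have adj_of : ∀ (v : V) (e : Sym2 V), z e ≠ 0 → v ∈ e → ∃ w, H.Adj v w ∧ e = s(v, w) := by
    intro v e hze hve
    obtain ⟨w, rfl⟩ := Sym2.mem_iff_exists.mp hve
    have hvw : v ≠ w := by
      intro hvw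
      exact G.not_isDiag_of_mem_edgeSet (hsupp _ hze) (by rw [← hvw]; exact rfl)
    exact ⟨w, (hHadj v w).mpr ⟨hze, hvw⟩, rfl⟩
  have hdeg : ∀ v u, H.Adj v u → ∃ w, H.Adj v w ∧ w ≠ u := by
    intro v u hvu
    obtain ⟨e', hz', hv', hne'⟩ := step2 v s(v, u) (hHz v u hvu) (by simp)
    obtain ⟨w, hw, rfl⟩ := adj_of v e' hz' hv'
    refine ⟨w, hw, ?_⟩
    rintro rfl
    exact hne' rfl
  obtain ⟨x0, y0, hxy0⟩ : ∃ a b, H.Adj a b := by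
    have hex : ∃ a b, e₀ = s(a, b) := by
      induction e₀ using Sym2.ind with
      | _ a b => exact ⟨a, b, rfl⟩
    obtain ⟨a, b, rfl⟩ := hex
    obtain ⟨w, hw, -⟩ := adj_of a s(a, b) he₀ (by simp)
    exact ⟨a, w, hw⟩
  obtain ⟨u, c, hc⟩ := exists_cycle_all hxy0 hdeg
  have hcG : (Walk.mapLe hHG c).IsCycle := hc.mapLe hHG
  have hodd' : Odd c.length := by
    have := hodd u (Walk.mapLe hHG c) hcG
    rwa [mapLe_length] at this
  -- every support edge touching the cycle is an edge of the cycle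
  have step6 : ∀ w ∈ c.support, ∀ e, z e ≠ 0 → w ∈ e → e ∈ c.edges := by
    intro w hw e hze hwe
    by_contra hnotin
    obtain ⟨x, hAdjwx, rfl⟩ := adj_of w e hze hwe
    by_cases hbr : (H \ SimpleGraph.fromEdgeSet {s(w, x)}).Reachable w x
    · obtain ⟨u₂, c₂, hc₂, he₂⟩ :=
        SimpleGraph.adj_and_reachable_delete_edges_iff_exists_cycle.mp ⟨hAdjwx, hbr⟩
      have hru : G.Reachable u u₂ := by
        have h1 : H.Reachable u w := ⟨c.takeUntil w hw⟩
        have h2 : H.Reachable u₂ w := ⟨c₂.takeUntil w (c₂.fst_mem_support_of_mem_edges he₂)⟩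
        exact (h1.mono hHG).trans (h2.mono hHG).symm
      have hiff := huniq u u₂ (Walk.mapLe hHG c) (Walk.mapLe hHG c₂) hcG (hc₂.mapLe hHG)
        hru s(w, x)
      rw [mapLe_edges, mapLe_edges] at hiff
      exact hnotin (hiff.mpr he₂)
    · -- s(w,x) is a bridge of H; find a cycle on the x-side
      have hnr : ¬ (H.deleteEdges {s(w, x)}).Reachable w x := hbr
      set H' := H.deleteEdges {s(w, x)} with hH'
      let H'' : SimpleGraph V :=
        { Adj := fun a b => H'.Adj a b ∧ H'.Reachable x a ∧ H'.Reachable x b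
          symm := by
            constructor
            rintro a b ⟨h1, h2, h3⟩
            exact ⟨h1.symm, h3, h2⟩
          loopless := by
            constructor
            rintro a ⟨h1, -, -⟩
            exact H'.loopless.irrefl a h1 }
      have hH''adj : ∀ a b, H''.Adj a b ↔
          H'.Adj a b ∧ H'.Reachable x a ∧ H'.Reachable x b := fun a b => Iff.rfl
      have hH''H : H'' ≤ H := fun a b hab => SimpleGraph.deleteEdges_le _ hab.1
      obtain ⟨e₂, hz₂, hx₂, hne₂⟩ := step2 x s(w, x) hze (by simp)
      obtain ⟨y', hy', rfl⟩ := adj_of x e₂ hz₂ hx₂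
      have hy'H' : H'.Adj x y' := by
        rw [hH', SimpleGraph.deleteEdges_adj]
        refine ⟨hy', ?_⟩
        simpa using hne₂
      have hxy'' : H''.Adj x y' := ⟨hy'H', Reachable.refl x, ⟨hy'H'.toWalk⟩⟩
      have hdeg'' : ∀ v, v ≠ x → ∀ a, H''.Adj v a → ∃ b, H''.Adj v b ∧ b ≠ a := by
        intro v hvx a hva
        obtain ⟨hva', hrxv, hrxa⟩ := hva
        have hvw : v ≠ w := by
          rintro rfl
          exact hnr hrxv.symm
        have hvnot : v ∉ s(w, x) := by
          rw [Sym2.mem_iff]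
          rintro (rfl | rfl)
          exacts [hvw rfl, hvx rfl]
        have hzva : z s(v, a) ≠ 0 := hHz v a (SimpleGraph.deleteEdges_le _ hva')
        obtain ⟨e₃, hz₃, hv₃, hne₃⟩ := step2 v s(v, a) hzva (by simp)
        obtain ⟨b, hb, rfl⟩ := adj_of v e₃ hz₃ hv₃
        have hbH' : H'.Adj v b := by
          rw [hH', SimpleGraph.deleteEdges_adj]
          refine ⟨hb, ?_⟩
          simp only [Set.mem_singleton_iff]
          intro heq
          exact hvnot (heq ▸ Sym2.mem_mk_left v b)
        refine ⟨b, ⟨hbH', hrxv, hrxv.trans ⟨hbH'.toWalk⟩⟩, ?_⟩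
        rintro rfl
        exact hne₃ rfl
      obtain ⟨u₂, c₂, hc₂⟩ :=
        exists_cycle_except (H''.edgeSet.ncard) H'' x y' le_rfl hxy'' hdeg''
      -- no vertex of c is x-reachable in H'
      have hcnotreach : ∀ a ∈ c.support, ¬ H'.Reachable x a := by
        intro a ha hra
        have hce : ∀ e' ∈ c.edges, e' ∉ ({s(w, x)} : Set (Sym2 V)) := by
          intro e' he' hmem
          rw [Set.mem_singleton_iff] at hmem
          exact hnotin (hmem ▸ he')
        have hsup : (c.toDeleteEdges {s(w, x)} hce).support = c.support :=
          Walk.support_transfer _ _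
        have h1 : H'.Reachable u a := ⟨(c.toDeleteEdges {s(w, x)} hce).takeUntil a (by rw [hsup]; exact ha)⟩
        have h2 : H'.Reachable u w := ⟨(c.toDeleteEdges {s(w, x)} hce).takeUntil w (by rw [hsup]; exact hw)⟩
        exact hnr (h2.symm.trans (h1.trans hra.symm))
      have hcne : c.edges ≠ [] := by
        intro hnil
        have h3 := hc.three_le_length
        rw [← Walk.length_edges, hnil] at h3
        simp at h3
      obtain ⟨ec, hec⟩ : ∃ ec, ec ∈ c.edges := List.exists_mem_of_ne_nil _ hcne
      obtain ⟨p, q₁, rfl⟩ : ∃ a b, ec = s(a, b) := by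
        induction ec using Sym2.ind with
        | _ a b => exact ⟨a, b, rfl⟩
      have hec2 : s(p, q₁) ∉ c₂.edges := by
        intro hmem
        have hecH'' : H''.Adj p q₁ := Walk.edges_subset_edgeSet c₂ hmem
        exact hcnotreach p (c.fst_mem_support_of_mem_edges hec) hecH''.2.1
      have hru2 : G.Reachable u u₂ := by
        have h1 : H.Reachable u w := ⟨c.takeUntil w hw⟩
        have h2 : H.Reachable w x := ⟨hAdjwx.toWalk⟩
        have h3 : H'.Reachable x u₂ := by
          cases c₂ with
          | nil => exact absurd rfl hc₂.ne_nil
          | cons h₂ q₂ => exact h₂.2.1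
        exact (h1.mono hHG).trans ((h2.mono hHG).trans
          ((h3.mono (le_trans (SimpleGraph.deleteEdges_le _) hHG))))
      have hiff := huniq u u₂ (Walk.mapLe hHG c) (Walk.mapLe (le_trans hH''H hHG) c₂) hcG
        (hc₂.mapLe _) hru2 s(p, q₁)
      rw [mapLe_edges, mapLe_edges] at hiff
      exact hec2 (hiff.mp hec)
  -- alternation around the odd cycle kills an edge coefficient
  cases c with
  | nil => exact absurd rfl hc.ne_nil
  | @cons _ v₁ _ h q =>
    obtain ⟨hqp, hnotin₁⟩ := (Walk.cons_isCycle_iff q h).mp hc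
    have hlen2 : 2 ≤ q.length := by
      have h3 := hc.three_le_length
      rw [Walk.length_cons] at h3
      omega
    have hyp : ∀ v ∈ q.support, v ≠ u → T z v = 0 ∧
        ∀ e, z e ≠ 0 → v ∈ e → e ∈ (Walk.cons h q).edges := by
      intro v hv hvu
      exact ⟨hT v, fun e hze hve =>
        step6 v (by rw [Walk.support_cons]; exact List.mem_cons_of_mem _ hv) e hze hve⟩
    have halt := alt_path z q h hqp (fun v _ hvu huv => hvu huv.symm) (fun _ => hlen2) hyp
    have heven : Even q.length := by
      rcases hodd' with ⟨k, hk⟩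
      rw [Walk.length_cons] at hk
      exact ⟨k, by omega⟩
    rw [heven.neg_one_pow, one_mul] at halt
    have hqe : q.edges ≠ [] := by
      intro h0
      have hlq := Walk.length_edges q
      rw [h0] at hlq
      simp only [List.length_nil] at hlq
      omega
    set eL := q.edges.getLast hqe with heLdef
    have halt2 : z eL = z s(u, v₁) := by
      rw [← halt]
      congr 1
      rw [heLdef]
      simp only [Walk.edges_cons]
      exact (List.getLast_cons _).symm
    have heLq : eL ∈ q.edges := List.getLast_mem hqe
    have hu_eL : u ∈ eL := end_mem_getLast_edges q hqe
    have he1ne : s(u, v₁) ≠ eL := fun hq2 => hnotin₁ (hq2 ▸ heLq)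
    have hTu : T z u = z s(u, v₁) + z eL := by
      rw [T, ← Finset.sum_subset (Finset.subset_univ ({s(u, v₁), eL} : Finset (Sym2 V)))]
      · rw [Finset.sum_insert (by simpa using he1ne), Finset.sum_singleton]
        have i1 : inc s(u, v₁) u = 1 := inc_self_left u v₁
        have i2 : inc eL u = 1 := by simp [inc, hu_eL]
        rw [i1, i2, mul_one, mul_one]
      · intro e _ hnm
        by_cases hze : z e = 0
        · simp [hze]
        by_cases hum : u ∈ e
        · exfalso
          have hmem := step6 u (Walk.start_mem_support _) e hze hum
          rw [Walk.edges_cons] at hmem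
          rcases List.mem_cons.mp hmem with rfl | hmem'
          · exact hnm (by simp)
          · have heq : e = q.edges.getLast hqe := last_edge_of_mem hqp hmem' hum hqe
            exact hnm (by rw [heq, ← heLdef]; simp)
        · simp [inc, hum]
    have h0 := hT u
    rw [hTu] at h0
    have hz1 : z s(u, v₁) = 0 := by linarith
    exact hHz u v₁ h hz1

end Main



section K1

variable {G : SimpleGraph V}

lemma K1even [Fintype V] {u : V} {c : G.Walk u u} (hc : c.IsCycle)
    (hne : ¬ Odd c.length) :
    ∃ z : Sym2 V → ℤ, z ≠ 0 ∧ (∀ e, z e ≠ 0 → e ∈ G.edgeSet) ∧ ∀ w, T z w = 0 := by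
  classical
  refine ⟨altE c, ?_, ?_, ?_⟩
  · cases c with
    | nil => exact absurd rfl hc.ne_nil
    | @cons _ v₁ _ h q =>
      obtain ⟨hqp, hnotin₁⟩ := (Walk.cons_isCycle_iff q h).mp hc
      intro h0
      have h1 : altE (Walk.cons h q) s(u, v₁) = 0 := by rw [h0]; rfl
      rw [altE_cons, if_pos rfl] at h1
      have h2 : altE q s(u, v₁) = 0 := by
        by_contra h3
        exact hnotin₁ (altE_support q _ h3)
      rw [h2] at h1
      simp at h1
  · intro e hze
    exact Walk.edges_subset_edgeSet c (altE_support c e hze)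
  · intro w
    rw [T_altE]
    have heven : Even c.length := Nat.not_odd_iff_even.mp hne
    have hoddp : Odd (c.length + 1) := heven.add_one
    rw [hoddp.neg_one_pow]
    ring

lemma K1two [Fintype V] {u v : V} {c : G.Walk u u} {c' : G.Walk v v}
    (hc : c.IsCycle) (hc' : c'.IsCycle) (ho : Odd c.length) (ho' : Odd c'.length)
    (hr : G.Reachable u v) {e₀ : Sym2 V} (h1 : e₀ ∈ c.edges) (h2 : e₀ ∉ c'.edges) :
    ∃ z : Sym2 V → ℤ, z ≠ 0 ∧ (∀ e, z e ≠ 0 → e ∈ G.edgeSet) ∧ ∀ w, T z w = 0 := by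
  classical
  obtain ⟨p⟩ := hr
  refine ⟨fun e => altE c e + (-1)^(p.length+1) * altE c' e - 2 * altE p e, ?_, ?_, ?_⟩
  · intro h0
    have hz0 : altE c e₀ + (-1)^(p.length+1) * altE c' e₀ - 2 * altE p e₀ = 0 :=
      congrFun h0 e₀
    have hc'0 : altE c' e₀ = 0 := by
      by_contra h3
      exact h2 (altE_support c' e₀ h3)
    rw [hc'0, mul_zero, add_zero] at hz0
    rcases altE_pm c hc.edges_nodup e₀ h1 with hpm | hpm <;> rw [hpm] at hz0 <;> omega
  · intro e hze
    by_cases hec : altE c e ≠ 0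
    · exact Walk.edges_subset_edgeSet c (altE_support c e hec)
    by_cases hec' : altE c' e ≠ 0
    · exact Walk.edges_subset_edgeSet c' (altE_support c' e hec')
    by_cases hep : altE p e ≠ 0
    · exact Walk.edges_subset_edgeSet p (altE_support p e hep)
    exfalso
    push_neg at hec hec' hep
    exact hze (by simp [hec, hec', hep])
  · intro w
    have hlin : T (fun e => altE c e + (-1)^(p.length+1) * altE c' e - 2 * altE p e) w
        = T (altE c) w + (-1)^(p.length+1) * T (altE c') w - 2 * T (altE p) w := by
      simp only [T, add_mul, sub_mul, mul_assoc, Finset.sum_add_distrib,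
        Finset.sum_sub_distrib, ← Finset.mul_sum]
    rw [hlin, T_altE, T_altE, T_altE, (ho.add_one).neg_one_pow, (ho'.add_one).neg_one_pow]
    ring

lemma not_cond_imp_exists [Fintype V]
    (hnot : ¬ ((∀ (u : V) (c : G.Walk u u), c.IsCycle → Odd c.length) ∧
      (∀ (u v : V) (c : G.Walk u u) (c' : G.Walk v v), c.IsCycle → c'.IsCycle →
        G.Reachable u v → ∀ e, e ∈ c.edges ↔ e ∈ c'.edges))) :
    ∃ z : Sym2 V → ℤ, z ≠ 0 ∧ (∀ e, z e ≠ 0 → e ∈ G.edgeSet) ∧ ∀ w, T z w = 0 := by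
  by_cases hA : ∀ (u : V) (c : G.Walk u u), c.IsCycle → Odd c.length
  · have hB : ¬ (∀ (u v : V) (c : G.Walk u u) (c' : G.Walk v v), c.IsCycle → c'.IsCycle →
        G.Reachable u v → ∀ e, e ∈ c.edges ↔ e ∈ c'.edges) := fun hB => hnot ⟨hA, hB⟩
    push_neg at hB
    obtain ⟨u, v, c, c', hc, hc', hr, e₀, he₀⟩ := hB
    rcases he₀ with ⟨hin, hnin⟩ | ⟨hnin, hin⟩
    · exact K1two hc hc' (hA u c hc) (hA v c' hc') hr hin hnin
    · exact K1two hc' hc (hA v c' hc') (hA u c hc) hr.symm hin hnin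
  · push_neg at hA
    obtain ⟨u, c, hc, hodd⟩ := hA
    exact K1even hc hodd

end K1



section Algebra

variable (K : Type*) [Field K]

noncomputable def incF : Sym2 V → (V →₀ ℕ) :=
  Sym2.lift ⟨fun i j => Finsupp.single i 1 + Finsupp.single j 1, fun i j => add_comm _ _⟩

lemma incF_mk (i j : V) : incF s(i, j) = Finsupp.single i 1 + Finsupp.single j 1 := by
  simp [incF]

noncomputable def F (G : SimpleGraph V) (m : ↥G.edgeSet →₀ ℕ) : V →₀ ℕ :=
  m.sum fun e k => k • incF (e : Sym2 V)

lemma edgeMonomial_eq (e : Sym2 V) :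
    FreimanPaper.edgeMonomial K e = monomial (incF e) (1 : K) := by
  induction e using Sym2.ind with
  | _ i j =>
    have h1 : FreimanPaper.edgeMonomial K s(i, j) = X i * X j := by
      simp [FreimanPaper.edgeMonomial]
    rw [h1, incF_mk, ← pow_one (X i : MvPolynomial V K), ← pow_one (X j : MvPolynomial V K),
      X_pow_eq_monomial, X_pow_eq_monomial, monomial_mul, one_mul]

lemma edgeMonomial_pow (e : Sym2 V) (n : ℕ) :
    FreimanPaper.edgeMonomial K e ^ n = monomial (n • incF e) (1 : K) := by
  rw [edgeMonomial_eq, monomial_pow, one_pow]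

lemma prod_edgeMonomial (G : SimpleGraph V) (m : ↥G.edgeSet →₀ ℕ) :
    (m.prod fun e k => FreimanPaper.edgeMonomial K (e : Sym2 V) ^ k)
      = monomial (F G m) (1 : K) := by
  induction m using Finsupp.induction with
  | zero => simp [F]
  | single_add a b f haf hb ih =>
    rw [Finsupp.prod_add_index' (fun e => pow_zero _) (fun e k l => pow_add _ _ _),
      Finsupp.prod_single_index
        (h := fun (e : ↥G.edgeSet) (k : ℕ) => FreimanPaper.edgeMonomial K (e : Sym2 V) ^ k)
        (pow_zero _), ih, edgeMonomial_pow, monomial_mul, one_mul]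
    have hFadd : F G ((fun₀ | a => b) + f) = b • incF ↑a + F G f := by
      rw [F, Finsupp.sum_add_index'
          (h := fun (e : ↥G.edgeSet) (k : ℕ) => k • incF (e : Sym2 V))
          (fun e => zero_smul ℕ (incF (e : Sym2 V)))
          (fun e k l => add_smul k l (incF (e : Sym2 V))),
        Finsupp.sum_single_index
          (h := fun (e : ↥G.edgeSet) (k : ℕ) => k • incF (e : Sym2 V))
          (zero_smul ℕ _)]
      rfl
    rw [hFadd]

lemma aeval_monomial_eq (G : SimpleGraph V) (m : ↥G.edgeSet →₀ ℕ) (r : K) :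
    (aeval fun e : G.edgeSet => FreimanPaper.edgeMonomial K (e : Sym2 V)) (monomial m r)
      = monomial (F G m) r := by
  rw [aeval_monomial, prod_edgeMonomial, algebraMap_eq, C_mul_monomial, mul_one]

lemma algIndep_iff_injF (G : SimpleGraph V) :
    AlgebraicIndependent K (fun e : G.edgeSet => FreimanPaper.edgeMonomial K (e : Sym2 V))
      ↔ Function.Injective (F G) := by
  classical
  rw [algebraicIndependent_iff_injective_aeval]
  constructor
  · intro hinj m₁ m₂ heq
    have hmono : (monomial m₁ (1 : K)) = monomial m₂ (1 : K) := by
      apply hinj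
      rw [aeval_monomial_eq, aeval_monomial_eq, heq]
    by_contra hne
    have hcoeff := congrArg (coeff m₁) hmono
    rw [coeff_monomial, coeff_monomial, if_pos rfl,
      if_neg (fun hx : m₂ = m₁ => hne hx.symm)] at hcoeff
    exact one_ne_zero hcoeff
  · intro hF
    have hker : ∀ P : MvPolynomial ↥G.edgeSet K,
        (aeval fun e : G.edgeSet => FreimanPaper.edgeMonomial K (e : Sym2 V)) P = 0 →
          P = 0 := by
      intro P hP
      have hrepr : (aeval fun e : G.edgeSet => FreimanPaper.edgeMonomial K (e : Sym2 V)) P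
          = ∑ m' ∈ P.support, monomial (F G m') (coeff m' P) := by
        conv_lhs => rw [as_sum P]
        rw [map_sum]
        exact Finset.sum_congr rfl fun m' _ => aeval_monomial_eq K G m' _
      apply MvPolynomial.ext
      intro m
      have h1 : coeff (F G m) (∑ m' ∈ P.support, monomial (F G m') (coeff m' P))
          = coeff m P := by
        rw [coeff_sum, Finset.sum_eq_single m]
        · rw [coeff_monomial, if_pos rfl]
        · intro b _ hbm
          rw [coeff_monomial, if_neg (fun hx => hbm (hF hx))]
        · intro hm
          rw [coeff_monomial, if_pos rfl]
          exact notMem_support_iff.mp hm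
      rw [coeff_zero, ← h1, ← hrepr, hP, coeff_zero]
    intro P Q hPQ
    have hs : P - Q = 0 := hker _ (by rw [map_sub, hPQ, sub_self])
    exact sub_eq_zero.mp hs

lemma incF_cast {G : SimpleGraph V} {e : Sym2 V} (he : e ∈ G.edgeSet) (v : V) :
    ((incF e v : ℕ) : ℤ) = inc e v := by
  classical
  induction e using Sym2.ind with
  | _ i j =>
    have hij : i ≠ j := by
      intro h
      exact G.not_isDiag_of_mem_edgeSet he (by rw [h]; exact Sym2.mk_isDiag_iff.mpr rfl)
    rw [incF_mk]
    simp only [Finsupp.add_apply, Finsupp.single_apply, inc, Sym2.mem_iff]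
    by_cases h1 : v = i <;> by_cases h2 : v = j <;>
      simp_all [eq_comm]

open Classical in
lemma F_apply_int [Fintype V] (G : SimpleGraph V) (m : ↥G.edgeSet →₀ ℕ) (v : V) :
    ((F G m) v : ℤ)
      = ∑ e : Sym2 V, (if h : e ∈ G.edgeSet then ((m ⟨e, h⟩ : ℕ) : ℤ) else 0) * inc e v := by
  classical
  have hRHS : (∑ e : Sym2 V, (if h : e ∈ G.edgeSet then ((m ⟨e, h⟩ : ℕ) : ℤ) else 0) * inc e v)
      = ∑ a ∈ m.support, ((m a : ℕ) : ℤ) * inc (a : Sym2 V) v := by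
    rw [← Finset.sum_subset
      (Finset.subset_univ (m.support.map ⟨Subtype.val, Subtype.val_injective⟩))]
    · rw [Finset.sum_map]
      apply Finset.sum_congr rfl
      intro a _
      simp only [Function.Embedding.coeFn_mk]
      rw [dif_pos a.2, Subtype.coe_eta]
    · intro e _ hnm
      by_cases h : e ∈ G.edgeSet
      · rw [dif_pos h]
        have : m ⟨e, h⟩ = 0 := by
          rw [← Finsupp.notMem_support_iff]
          intro hmem
          exact hnm (Finset.mem_map.mpr ⟨⟨e, h⟩, hmem, rfl⟩)
        rw [this]
        simp
      · rw [dif_neg h, zero_mul]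
  rw [hRHS]
  have hLHS : (F G m) v = ∑ a ∈ m.support, m a * incF (a : Sym2 V) v := by
    rw [F, Finsupp.sum_apply]
    rw [Finsupp.sum]
    apply Finset.sum_congr rfl
    intro a _
    rw [Finsupp.smul_apply, smul_eq_mul]
  rw [hLHS]
  push_cast
  apply Finset.sum_congr rfl
  intro a _
  rw [incF_cast a.2]

lemma injF_iff_ker [Fintype V] (G : SimpleGraph V) :
    Function.Injective (F G) ↔
      ∀ z : Sym2 V → ℤ, (∀ e, z e ≠ 0 → e ∈ G.edgeSet) → (∀ w, T z w = 0) → z = 0 := by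
  classical
  constructor
  · intro hF z hsupp hT
    set m₁ : ↥G.edgeSet →₀ ℕ := Finsupp.equivFunOnFinite.symm (fun e => (z ↑e).toNat) with hm₁
    set m₂ : ↥G.edgeSet →₀ ℕ := Finsupp.equivFunOnFinite.symm (fun e => (-(z ↑e)).toNat)
      with hm₂
    have hm : ∀ (e : ↥G.edgeSet), ((m₁ e : ℕ) : ℤ) - ((m₂ e : ℕ) : ℤ) = z ↑e := by
      intro e
      rw [hm₁, hm₂]
      simp only [Finsupp.coe_equivFunOnFinite_symm]
      exact Int.toNat_sub_toNat_neg (z ↑e)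
    have hFm : F G m₁ = F G m₂ := by
      ext v
      have hcast : ((F G m₁) v : ℤ) = ((F G m₂) v : ℤ) := by
        rw [F_apply_int, F_apply_int, ← sub_eq_zero, ← Finset.sum_sub_distrib]
        have hTv := hT v
        rw [T] at hTv
        rw [← hTv]
        apply Finset.sum_congr rfl
        intro e _
        by_cases h : e ∈ G.edgeSet
        · rw [dif_pos h, dif_pos h, ← sub_mul]
          rw [hm ⟨e, h⟩]
        · rw [dif_neg h, dif_neg h]
          have hz0 : z e = 0 := by
            by_contra h3
            exact h (hsupp e h3)
          rw [hz0]
          ring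
      exact_mod_cast hcast
    have hmm := hF hFm
    funext e
    show z e = 0
    by_cases h : e ∈ G.edgeSet
    · have h1 : m₁ ⟨e, h⟩ = m₂ ⟨e, h⟩ := by rw [hmm]
      have h2 := hm ⟨e, h⟩
      rw [h1, sub_self] at h2
      exact h2.symm
    · by_contra h3
      exact h (hsupp e h3)
  · intro hker m₁ m₂ heq
    set z : Sym2 V → ℤ :=
      fun e => if h : e ∈ G.edgeSet then ((m₁ ⟨e, h⟩ : ℕ) : ℤ) - ((m₂ ⟨e, h⟩ : ℕ) : ℤ) else 0
      with hzdef
    have hz : z = 0 := by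
      apply hker z
      · intro e hze
        by_contra h
        exact hze (by simp [hzdef, h])
      · intro w
        rw [T]
        calc ∑ e : Sym2 V, z e * inc e w
            = ∑ e : Sym2 V, ((if h : e ∈ G.edgeSet then ((m₁ ⟨e, h⟩ : ℕ) : ℤ) else 0) * inc e w
                - (if h : e ∈ G.edgeSet then ((m₂ ⟨e, h⟩ : ℕ) : ℤ) else 0) * inc e w) := by
              apply Finset.sum_congr rfl
              intro e _
              by_cases h : e ∈ G.edgeSet <;> simp [hzdef, h, sub_mul]
          _ = ((F G m₁) w : ℤ) - ((F G m₂) w : ℤ) := by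
              rw [Finset.sum_sub_distrib, F_apply_int, F_apply_int]
          _ = 0 := by rw [heq, sub_self]
    ext a
    have h1 : z ↑a = 0 := by rw [hz]; rfl
    have h2 : ((m₁ a : ℕ) : ℤ) - ((m₂ a : ℕ) : ℤ) = 0 := by
      rw [← h1, hzdef]
      simp only [a.2, dif_pos, Subtype.coe_eta]
    exact_mod_cast sub_eq_zero.mp h2

end Algebra


end EdgeRingAux

open FreimanPaper in
/-- The edge ring `K[G] = K[x_i x_j : {i,j} ∈ E(G)]` of a finite simple graph `G` is a
polynomial ring — equivalently, the monomials `x_i x_j`, `{i,j} ∈ E(G)`, are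
algebraically independent over `K` — if and only if each connected component of `G`
contains at most one cycle, and this cycle is odd. -/
theorem edgeRing_polynomialRing_iff {K : Type*} [Field K] {V : Type*} [Fintype V]
    (G : SimpleGraph V) :
    AlgebraicIndependent K (fun e : G.edgeSet => edgeMonomial K (e : Sym2 V)) ↔
      AtMostOneOddCyclePerComponent G := by
  classical
  rw [EdgeRingAux.algIndep_iff_injF K G, EdgeRingAux.injF_iff_ker G]
  constructor
  · intro hker
    by_contra hnot
    obtain ⟨z, hz, hsupp, hT⟩ := EdgeRingAux.not_cond_imp_exists (G := G) hnot
    exact hz (hker z hsupp hT)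
  · rintro ⟨hodd, huniq⟩ z hsupp hT
    exact EdgeRingAux.cond_imp_ker_trivial hodd huniq z hsupp hT
end
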